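/- Lemma C.1 (eigenvalues of the α-distance matrix are bounded away from zero). Let α ∈ (0,2), let x_1,…,x_n ∈ ℝ^{d(n)} follow the covariance or sphere model in the high-dimensional regime tr(Σ_{d(n)})/n^β → c > 0, set z_i = x_i/sqrt(tr Σ_d), and let D_α be the n×n matrix with entries (D_α)_{ij} = ‖z_i − z_j‖₂^α. Then, for fixed ε > 0, there exist a constant c' > 0 and N such that for all n ≥ N and every sample satisfying max_{i,j≤n} |x_iᵀx_j/tr(Σ_d) − δ_{ij}| ≤ n^{−β/2}(log n)^{(1+ε)/2} (the event E_X), every eigenvalue λ of D_α satisfies |λ| ≥ c'; moreover D_α has exactly one positive eigenvalue, which is at least (n−1)·c', and its remaining n−1 eigenvalues are at most −c'. -/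

import Mathlib

open MeasureTheory ProbabilityTheory Filter Matrix
open scoped Topology NNReal ENNReal

noncomputable section
def dotp {d : ℕ} (x y : Fin d → ℝ) : ℝ := ∑ i, x i * y i
def sqnorm {d : ℕ} (x : Fin d → ℝ) : ℝ := dotp x x
def IsCoordDist (ν : Measure ℝ) : Prop :=
  ν = gaussianReal 0 1 ∨
    (IsProbabilityMeasure ν ∧ (∃ C : ℝ, ∀ᵐ x ∂ν, |x| ≤ C) ∧
      (∫ x, x ∂ν) = 0 ∧ (∫ x, x ^ 2 ∂ν) = 1)
open scoped ComplexOrder in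
/-- The positive semidefinite square root of a positive semidefinite matrix
(the definition `Matrix.PosSemidef.sqrt` of the older Mathlib, removed since). -/
def Matrix.PosSemidef.sqrt {n 𝕜 : Type*} [Fintype n] [DecidableEq n] [RCLike 𝕜]
    {A : Matrix n n 𝕜} (hA : A.PosSemidef) : Matrix n n 𝕜 :=
  hA.isHermitian.eigenvectorUnitary.1 * diagonal ((↑) ∘ (√·) ∘ hA.isHermitian.eigenvalues) *
    (star hA.isHermitian.eigenvectorUnitary : Matrix n n 𝕜)
def IsCovarianceModel {d : ℕ} (S : Matrix (Fin d) (Fin d) ℝ) (hS : S.PosSemidef)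
    (μ : Measure (Fin d → ℝ)) : Prop :=
  ∃ ν : Measure ℝ, IsCoordDist ν ∧
    μ = (Measure.pi fun _ : Fin d => ν).map (fun w => hS.sqrt.mulVec w)
def IsSphereModel {d : ℕ} (S : Matrix (Fin d) (Fin d) ℝ) (hS : S.PosSemidef)
    (μ : Measure (Fin d → ℝ)) : Prop :=
  ∃ μZ : Measure (Fin d → ℝ), IsCovarianceModel S hS μZ ∧
    μ = μZ.map (fun z => (Real.sqrt S.trace / Real.sqrt (sqnorm z)) • z)
def OpNormOne {d : ℕ} (S : Matrix (Fin d) (Fin d) ℝ) : Prop :=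
  IsGreatest {r : ℝ | ∃ x : Fin d → ℝ, sqnorm x = 1 ∧ dotp x (S.mulVec x) = r} 1
def IsPSDKernel1 (q : ℝ → ℝ → ℝ) : Prop :=
  ∀ (N : ℕ) (u : Fin N → ℝ), (Matrix.of fun a b => q (u a) (u b)).PosSemidef
def AssumptionA1 (g : ℝ → ℝ → ℝ → ℝ) (gj : ℕ → ℝ → ℝ → ℝ) : Prop :=
  (∃ δ > (0:ℝ), ∀ u v t : ℝ, u ∈ Set.Icc (1 - δ) (1 + δ) → v ∈ Set.Icc (1 - δ) (1 + δ) →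
      |t| ≤ 1 + δ → HasSum (fun j : ℕ => gj j u v * t ^ j) (g u v t)) ∧
    ∀ j, IsPSDKernel1 (gj j)
def AssumptionA2 (g : ℝ → ℝ → ℝ → ℝ) : Prop :=
  ∃ δL > (0:ℝ), ∃ L : ℝ≥0, LipschitzOnWith L (fun u => g u u u) (Set.Icc (1 - δL) (1 + δL))
def AssumptionA3 (β : ℝ) (gj : ℕ → ℝ → ℝ → ℝ) : Prop :=
  (∀ i ≤ ⌊2 / β⌋₊, ∃ U ∈ 𝓝 ((1:ℝ), (1:ℝ)),
      ContDiffOn ℝ (⌊2 / β⌋₊ + 1 - i) (fun p : ℝ × ℝ => gj i p.1 p.2) U) ∧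
    ∃ J, ⌊2 / β⌋₊ < J ∧ 0 < gj J 1 1
def kermap {d : ℕ} (g : ℝ → ℝ → ℝ → ℝ) (τ : ℝ) (x y : Fin d → ℝ) : ℝ :=
  g (sqnorm x / τ) (sqnorm y / τ) (dotp x y / τ)
def kernelMatrix {d n : ℕ} (k : (Fin d → ℝ) → (Fin d → ℝ) → ℝ)
    (xs : Fin n → Fin d → ℝ) : Matrix (Fin n) (Fin n) ℝ :=
  Matrix.of fun i j => k (xs i) (xs j)
def ridgeEstimator {d n : ℕ} (k : (Fin d → ℝ) → (Fin d → ℝ) → ℝ) (lam : ℝ)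
    (fstar : (Fin d → ℝ) → ℝ) (xs : Fin n → Fin d → ℝ) (x : Fin d → ℝ) : ℝ :=
  dotProduct (fun i => fstar (xs i))
    (((kernelMatrix k xs + lam • (1 : Matrix (Fin n) (Fin n) ℝ))⁻¹).mulVec
      (fun i => k (xs i) x))
def biasOf {d : ℕ} (est : (Fin d → ℝ) → ℝ) (fstar : (Fin d → ℝ) → ℝ)
    (μ : Measure (Fin d → ℝ)) : ℝ :=
  ∫ x, (est x - fstar x) ^ 2 ∂μ
def polyApproxError (d m : ℕ) (f : (Fin d → ℝ) → ℝ) (μ : Measure (Fin d → ℝ)) : ℝ :=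
  ⨅ p : {p : MvPolynomial (Fin d) ℝ // p.totalDegree ≤ m},
    ∫ x, (f x - MvPolynomial.eval x (p : MvPolynomial (Fin d) ℝ)) ^ 2 ∂μ
def alphaExpG (α : ℝ) (g : ℝ → ℝ → ℝ → ℝ) : Prop :=
  ∀ u v t : ℝ, g u v t = Real.exp (-(u + v - 2 * t) ^ (α / 2))


namespace LemC1

lemma dotp_comm {d : ℕ} (x y : Fin d → ℝ) : dotp x y = dotp y x := by
  unfold dotp
  exact Finset.sum_congr rfl fun i _ => mul_comm _ _

lemma sqnorm_nonneg {d : ℕ} (x : Fin d → ℝ) : 0 ≤ sqnorm x := by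
  unfold sqnorm dotp
  exact Finset.sum_nonneg fun i _ => mul_self_nonneg _

lemma sqnorm_sub {d : ℕ} (x y : Fin d → ℝ) :
    sqnorm (x - y) = sqnorm x + sqnorm y - 2 * dotp x y := by
  unfold sqnorm dotp
  rw [Finset.mul_sum, ← Finset.sum_add_distrib, ← Finset.sum_sub_distrib]
  exact Finset.sum_congr rfl fun i _ => by simp only [Pi.sub_apply]; ring

lemma dotp_smul {d : ℕ} (a : ℝ) (x y : Fin d → ℝ) :
    dotp (a • x) (a • y) = a ^ 2 * dotp x y := by
  unfold dotp
  rw [Finset.mul_sum]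
  exact Finset.sum_congr rfl fun i _ => by
    simp only [Pi.smul_apply, smul_eq_mul]; ring

lemma gram_pow_nonneg {d n : ℕ} (z : Fin n → Fin d → ℝ) (q : Fin n → ℝ) (k : ℕ) :
    0 ≤ ∑ i, ∑ j, q i * q j * dotp (z i) (z j) ^ k := by
  classical
  set P := Fintype.piFinset (fun _ : Fin k => (Finset.univ : Finset (Fin d))) with hP
  have h : ∀ i j : Fin n, dotp (z i) (z j) ^ k
      = ∑ p ∈ P, (∏ t, z i (p t)) * ∏ t, z j (p t) := by
    intro i j
    rw [dotp, Finset.sum_pow']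
    exact Finset.sum_congr rfl fun p _ => by rw [← Finset.prod_mul_distrib]
  have key : ∑ i, ∑ j, q i * q j * dotp (z i) (z j) ^ k
      = ∑ p ∈ P, (∑ i, q i * ∏ t, z i (p t)) ^ 2 := by
    simp_rw [h, Finset.mul_sum]
    have e1 : ∀ i : Fin n, (∑ j, ∑ p ∈ P, q i * q j * ((∏ t, z i (p t)) * ∏ t, z j (p t)))
        = ∑ p ∈ P, ∑ j, q i * q j * ((∏ t, z i (p t)) * ∏ t, z j (p t)) :=
      fun i => Finset.sum_comm
    simp_rw [e1]
    rw [Finset.sum_comm]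
    refine Finset.sum_congr rfl fun p _ => ?_
    rw [sq, Finset.sum_mul_sum]
    exact Finset.sum_congr rfl fun i _ => Finset.sum_congr rfl fun j _ => by ring
  rw [key]
  exact Finset.sum_nonneg fun p _ => sq_nonneg _



lemma one_sub_exp_neg_le {x : ℝ} (hx : 0 ≤ x) : 1 - Real.exp (-x) ≤ x := by
  have := Real.add_one_le_exp (-x)
  linarith

lemma one_sub_exp_neg_nonneg {x : ℝ} (hx : 0 ≤ x) : 0 ≤ 1 - Real.exp (-x) := by
  have : Real.exp (-x) ≤ 1 := Real.exp_le_one_iff.mpr (by linarith)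
  linarith

lemma integrand_integrable {γ : ℝ} (hγ0 : 0 < γ) (hγ1 : γ < 1) {r : ℝ} (hr : 0 ≤ r) :
    IntegrableOn (fun s : ℝ => (1 - Real.exp (-(r * s))) * s ^ (-1 - γ)) (Set.Ioi 0) := by
  have hmeas : ∀ t : Set ℝ, t ⊆ Set.Ioi 0 → MeasurableSet t →
      AEStronglyMeasurable (fun s : ℝ => (1 - Real.exp (-(r * s))) * s ^ (-1 - γ))
        (volume.restrict t) := by
    intro t ht hmt
    have hcont : ContinuousOn (fun s : ℝ => (1 - Real.exp (-(r * s))) * s ^ (-1 - γ)) t := by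
      apply ContinuousOn.mul
      · exact (continuous_const.sub ((Real.continuous_exp).comp
          ((continuous_const.mul continuous_id).neg))).continuousOn
      · intro s hs
        exact (Real.continuousAt_rpow_const s _ (Or.inl (ne_of_gt (ht hs)))).continuousWithinAt
    exact hcont.aestronglyMeasurable hmt
  have hsplit : Set.Ioc (0:ℝ) 1 ∪ Set.Ioi 1 = Set.Ioi 0 := Set.Ioc_union_Ioi_eq_Ioi zero_le_one
  rw [← hsplit]
  apply IntegrableOn.union
  · -- on Ioc 0 1, dominate by r * s ^ (-γ)
    have hg : IntegrableOn (fun s : ℝ => r * s ^ (-γ)) (Set.Ioc (0:ℝ) 1) := by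
      have h1 : IntervalIntegrable (fun s : ℝ => s ^ (-γ)) volume 0 1 :=
        intervalIntegral.intervalIntegrable_rpow' (by linarith)
      have h2 : IntegrableOn (fun s : ℝ => s ^ (-γ)) (Set.Ioc (0:ℝ) 1) :=
        (intervalIntegrable_iff_integrableOn_Ioc_of_le zero_le_one).1 h1
      exact h2.const_mul r
    refine Integrable.mono hg (hmeas _ (fun x hx => hx.1) measurableSet_Ioc) ?_
    rw [ae_restrict_iff' measurableSet_Ioc]
    refine Filter.Eventually.of_forall fun s hs => ?_
    have hs0 : 0 < s := hs.1
    have hrs : 0 ≤ r * s := mul_nonneg hr hs0.le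
    have hb : 0 ≤ s ^ (-1 - γ) := Real.rpow_nonneg hs0.le _
    rw [Real.norm_eq_abs, Real.norm_eq_abs,
      abs_of_nonneg (mul_nonneg (one_sub_exp_neg_nonneg hrs) hb),
      abs_of_nonneg (mul_nonneg hr (Real.rpow_nonneg hs0.le _))]
    have h1 : 1 - Real.exp (-(r * s)) ≤ r * s := one_sub_exp_neg_le hrs
    calc (1 - Real.exp (-(r * s))) * s ^ (-1 - γ) ≤ (r * s) * s ^ (-1 - γ) :=
          mul_le_mul_of_nonneg_right h1 hb
      _ = r * s ^ (-γ) := by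
          rw [mul_assoc]
          congr 1
          nth_rewrite 1 [← Real.rpow_one s]
          rw [← Real.rpow_add hs0]
          norm_num
          congr 1
          ring
  · -- on Ioi 1, dominate by s ^ (-1 - γ)
    have hg : IntegrableOn (fun s : ℝ => s ^ (-1 - γ)) (Set.Ioi (1:ℝ)) :=
      integrableOn_Ioi_rpow_of_lt (by linarith) one_pos
    refine Integrable.mono hg (hmeas _ (fun x hx => Set.mem_Ioi.2 (lt_trans one_pos (Set.mem_Ioi.1 hx))) measurableSet_Ioi) ?_
    rw [ae_restrict_iff' measurableSet_Ioi]
    refine Filter.Eventually.of_forall fun s hs => ?_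
    have hs0 : (0:ℝ) < s := lt_trans one_pos hs
    have hrs : 0 ≤ r * s := mul_nonneg hr hs0.le
    have hb : 0 ≤ s ^ (-1 - γ) := Real.rpow_nonneg hs0.le _
    rw [Real.norm_eq_abs, Real.norm_eq_abs,
      abs_of_nonneg (mul_nonneg (one_sub_exp_neg_nonneg hrs) hb), abs_of_nonneg hb]
    have h2 : Real.exp (-(r * s)) ≤ 1 := Real.exp_le_one_iff.mpr (by linarith)
    nlinarith [Real.exp_pos (-(r * s))]

lemma integral_scaled {γ : ℝ} (hγ0 : 0 < γ) (hγ1 : γ < 1) {r : ℝ} (hr : 0 < r) :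
    ∫ s in Set.Ioi (0:ℝ), (1 - Real.exp (-(r * s))) * s ^ (-1 - γ)
      = r ^ γ * ∫ s in Set.Ioi (0:ℝ), (1 - Real.exp (-s)) * s ^ (-1 - γ) := by
  have h := integral_comp_mul_left_Ioi
    (fun t : ℝ => (1 - Real.exp (-t)) * t ^ (-1 - γ)) 0 hr
  rw [mul_zero] at h
  have key : ∫ s in Set.Ioi (0:ℝ), (1 - Real.exp (-(r * s))) * s ^ (-1 - γ)
      = ∫ s in Set.Ioi (0:ℝ),
          r ^ (1 + γ) * ((1 - Real.exp (-(r * s))) * (r * s) ^ (-1 - γ)) := by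
    refine setIntegral_congr_fun measurableSet_Ioi fun s hs => ?_
    have hs0 : (0:ℝ) < s := hs
    rw [Real.mul_rpow hr.le hs0.le]
    have hone : r ^ (1+γ) * r ^ (-1-γ) = 1 := by
      rw [← Real.rpow_add hr]; norm_num
    rw [show r ^ (1 + γ) * ((1 - Real.exp (-(r * s))) * (r ^ (-1 - γ) * s ^ (-1 - γ))) =
      (r ^ (1+γ) * r ^ (-1-γ)) * ((1 - Real.exp (-(r*s))) * s ^ (-1-γ)) from by ring,
      hone, one_mul]
  rw [key, integral_const_mul, h, smul_eq_mul]
  rw [← mul_assoc]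
  congr 1
  rw [← Real.rpow_neg_one r, ← Real.rpow_add hr]
  congr 1
  ring

def Jgam (γ : ℝ) : ℝ := ∫ s in Set.Ioi (0:ℝ), (1 - Real.exp (-s)) * s ^ (-1 - γ)

lemma base_integrable {γ : ℝ} (hγ0 : 0 < γ) (hγ1 : γ < 1) :
    IntegrableOn (fun s : ℝ => (1 - Real.exp (-s)) * s ^ (-1 - γ)) (Set.Ioi 0) := by
  have h := integrand_integrable hγ0 hγ1 (r := 1) zero_le_one
  simpa using h

lemma inv4_le_rpow {γ s : ℝ} (hγ0 : 0 < γ) (hγ1 : γ < 1) (h1 : 1 ≤ s) (h2 : s ≤ 2) :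
    (4:ℝ)⁻¹ ≤ s ^ (-1 - γ) := by
  have hs0 : (0:ℝ) < s := lt_of_lt_of_le one_pos h1
  have hpow : s ^ (1 + γ) ≤ 4 := by
    have ha : s ^ (1+γ) ≤ (2:ℝ) ^ (1+γ) :=
      Real.rpow_le_rpow hs0.le h2 (by linarith)
    have hb : (2:ℝ) ^ (1+γ) ≤ (2:ℝ) ^ (2:ℝ) :=
      Real.rpow_le_rpow_of_exponent_le one_le_two (by linarith)
    have hc : (2:ℝ) ^ (2:ℝ) = 4 := by
      rw [show (2:ℝ) = ((2:ℕ):ℝ) from by norm_num]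
      rw [Real.rpow_natCast]
      norm_num
    linarith
  have hpos : 0 < s ^ (1+γ) := Real.rpow_pos_of_pos hs0 _
  have hinv : s ^ (-1-γ) = (s ^ (1+γ))⁻¹ := by
    rw [← Real.rpow_neg hs0.le]; congr 1; ring
  rw [hinv]
  exact inv_anti₀ hpos hpow

lemma Jgam_pos {γ : ℝ} (hγ0 : 0 < γ) (hγ1 : γ < 1) : 0 < Jgam γ := by
  have hint := base_integrable hγ0 hγ1
  have hnn : 0 ≤ᵐ[volume.restrict (Set.Ioi (0:ℝ))]
      fun s : ℝ => (1 - Real.exp (-s)) * s ^ (-1-γ) := by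
    rw [Filter.EventuallyLE, ae_restrict_iff' measurableSet_Ioi]
    exact Filter.Eventually.of_forall fun s hs => by
      simpa using mul_nonneg (one_sub_exp_neg_nonneg (le_of_lt hs))
        (Real.rpow_nonneg (le_of_lt hs) (-1-γ))
  have hsub : ∫ s in Set.Ioc (1:ℝ) 2, (1 - Real.exp (-s)) * s ^ (-1-γ) ≤ Jgam γ :=
    setIntegral_mono_set hint hnn
      (HasSubset.Subset.eventuallyLE (fun x hx => lt_trans one_pos hx.1))
  have hconst : ∫ _s in Set.Ioc (1:ℝ) 2, ((1 - Real.exp (-1)) * 4⁻¹ : ℝ)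
      = (1 - Real.exp (-1)) * 4⁻¹ := by
    rw [setIntegral_const]
    rw [Real.volume_real_Ioc]
    norm_num
  have hlow : (1 - Real.exp (-1)) * 4⁻¹
      ≤ ∫ s in Set.Ioc (1:ℝ) 2, (1 - Real.exp (-s)) * s ^ (-1-γ) := by
    rw [← hconst]
    apply setIntegral_mono_on
    · exact integrableOn_const (by rw [Real.volume_Ioc]; exact ENNReal.ofReal_ne_top)
    · exact hint.mono_set (fun x hx => lt_trans one_pos hx.1)
    · exact measurableSet_Ioc
    · intro s hs
      have h1 : Real.exp (-s) ≤ Real.exp (-1) := Real.exp_le_exp.2 (by linarith [hs.1])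
      have h2 := inv4_le_rpow hγ0 hγ1 hs.1.le hs.2
      have h3 : (0:ℝ) ≤ 1 - Real.exp (-s) :=
        one_sub_exp_neg_nonneg (by linarith [hs.1] : (0:ℝ) ≤ s)
      exact mul_le_mul (by linarith) h2 (by norm_num) h3
  have hp : 0 < (1 - Real.exp (-1)) * (4:ℝ)⁻¹ := by
    have : Real.exp (-1) < 1 := Real.exp_lt_one_iff.mpr (by norm_num)
    nlinarith
  linarith

lemma expF_repr' {d n : ℕ} (z : Fin n → Fin d → ℝ) (v : Fin n → ℝ) (s : ℝ) :
    Summable (fun k : ℕ => ((2*s) ^ k / (k.factorial : ℝ)) *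
        ∑ i, ∑ j, (v i * Real.exp (-(s * sqnorm (z i))))
          * (v j * Real.exp (-(s * sqnorm (z j)))) * dotp (z i) (z j) ^ k) ∧
    ∑ i, ∑ j, v i * v j * Real.exp (-(sqnorm (z i - z j) * s))
      = ∑' k : ℕ, ((2*s) ^ k / (k.factorial : ℝ)) *
          ∑ i, ∑ j, (v i * Real.exp (-(s * sqnorm (z i))))
            * (v j * Real.exp (-(s * sqnorm (z j)))) * dotp (z i) (z j) ^ k := by
  set W : Fin n → ℝ := fun i => v i * Real.exp (-(s * sqnorm (z i))) with hW
  set F : Fin n → Fin n → ℕ → ℝ := fun i j k =>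
    ((2*s) ^ k / (k.factorial : ℝ)) * (W i * W j * dotp (z i) (z j) ^ k) with hF
  have hsumF : ∀ i j : Fin n, Summable (F i j) := by
    intro i j
    apply Summable.congr
      ((Real.summable_pow_div_factorial (2 * s * dotp (z i) (z j))).mul_left (W i * W j))
    intro k
    simp only [hF]
    rw [mul_pow]
    ring
  have hg : Summable (fun k => ∑ i, ∑ j, F i j k) :=
    summable_sum (fun i _ => summable_sum (fun j _ => hsumF i j))
  have hptk : ∀ k, (∑ i, ∑ j, F i j k) = ((2*s) ^ k / (k.factorial : ℝ)) *
      ∑ i, ∑ j, W i * W j * dotp (z i) (z j) ^ k := by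
    intro k
    rw [Finset.mul_sum]
    exact Finset.sum_congr rfl fun i _ => by rw [Finset.mul_sum]
  have hterm : ∀ i j : Fin n, v i * v j * Real.exp (-(sqnorm (z i - z j) * s))
      = ∑' k : ℕ, F i j k := by
    intro i j
    have hT : Real.exp (2 * s * dotp (z i) (z j))
        = ∑' k : ℕ, (2 * s * dotp (z i) (z j)) ^ k / (k.factorial : ℝ) := by
      rw [Real.exp_eq_exp_ℝ]
      exact congrFun NormedSpace.exp_eq_tsum_div _
    have hsplit : Real.exp (-(sqnorm (z i - z j) * s))
        = Real.exp (-(s * sqnorm (z i))) * Real.exp (-(s * sqnorm (z j)))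
            * Real.exp (2 * s * dotp (z i) (z j)) := by
      rw [← Real.exp_add, ← Real.exp_add]
      congr 1
      rw [sqnorm_sub]
      ring
    rw [hsplit, hT]
    calc v i * v j * (Real.exp (-(s * sqnorm (z i))) * Real.exp (-(s * sqnorm (z j)))
            * ∑' k : ℕ, (2 * s * dotp (z i) (z j)) ^ k / (k.factorial : ℝ))
        = (W i * W j) * ∑' k : ℕ, (2 * s * dotp (z i) (z j)) ^ k / (k.factorial : ℝ) := by
          simp only [hW]; ring
      _ = ∑' k : ℕ, (W i * W j) * ((2 * s * dotp (z i) (z j)) ^ k / (k.factorial : ℝ)) :=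
          tsum_mul_left.symm
      _ = ∑' k : ℕ, F i j k := tsum_congr fun k => by simp only [hF]; rw [mul_pow]; ring
  refine ⟨hg.congr hptk, ?_⟩
  calc ∑ i, ∑ j, v i * v j * Real.exp (-(sqnorm (z i - z j) * s))
      = ∑ i, ∑ j, ∑' k : ℕ, F i j k :=
        Finset.sum_congr rfl fun i _ => Finset.sum_congr rfl fun j _ => hterm i j
    _ = ∑ i, ∑' k : ℕ, ∑ j, F i j k :=
        Finset.sum_congr rfl fun i _ => (Summable.tsum_finsetSum fun j _ => hsumF i j).symm
    _ = ∑' k : ℕ, ∑ i, ∑ j, F i j k :=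
        (Summable.tsum_finsetSum fun i _ => summable_sum fun j _ => hsumF i j).symm
    _ = ∑' k : ℕ, ((2*s) ^ k / (k.factorial : ℝ)) *
          ∑ i, ∑ j, W i * W j * dotp (z i) (z j) ^ k := tsum_congr hptk

lemma expF_nonneg {d n : ℕ} (z : Fin n → Fin d → ℝ) (v : Fin n → ℝ) {s : ℝ} (hs : 0 < s) :
    0 ≤ ∑ i, ∑ j, v i * v j * Real.exp (-(sqnorm (z i - z j) * s)) := by
  obtain ⟨hsum, hrepr⟩ := expF_repr' z v s
  rw [hrepr]
  refine tsum_nonneg fun k => mul_nonneg (div_nonneg (pow_nonneg (by linarith) k)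
    (Nat.cast_nonneg _)) (gram_pow_nonneg z _ k)

lemma expF_ge {d n : ℕ} (K : ℕ) {τ : ℝ} (z : Fin n → Fin d → ℝ)
    (hτ0 : 0 ≤ τ) (hτ1 : τ ≤ 4⁻¹) (hτK : (K:ℝ) * τ ≤ 4⁻¹) (hnτ : (n:ℝ) * τ ^ K ≤ 4⁻¹)
    (hdiag : ∀ i, |sqnorm (z i) - 1| ≤ τ)
    (hoff : ∀ i j, i ≠ j → |dotp (z i) (z j)| ≤ τ)
    (v : Fin n → ℝ) {s : ℝ} (hs1 : 1 ≤ s) (hs2 : s ≤ 2) :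
    (2:ℝ) ^ K / (K.factorial : ℝ) * Real.exp (-6) / 2 * ∑ i, v i ^ 2
      ≤ ∑ i, ∑ j, v i * v j * Real.exp (-(sqnorm (z i - z j) * s)) := by
  obtain ⟨hsum, hrepr⟩ := expF_repr' z v s
  rw [hrepr]
  have hs0 : (0:ℝ) < s := lt_of_lt_of_le one_pos hs1
  set W : Fin n → ℝ := fun i => v i * Real.exp (-(s * sqnorm (z i))) with hW
  have hnn : ∀ k, 0 ≤ ((2*s) ^ k / (k.factorial : ℝ)) *
      ∑ i, ∑ j, W i * W j * dotp (z i) (z j) ^ k := fun k =>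
    mul_nonneg (div_nonneg (pow_nonneg (by linarith) k) (Nat.cast_nonneg _))
      (gram_pow_nonneg z W k)
  have hkth := Summable.le_tsum hsum K (fun k _ => hnn k)
  refine le_trans ?_ hkth
  -- now bound the K-th term from below
  have hWsq : Real.exp (-6) * ∑ i, v i ^ 2 ≤ ∑ i, W i ^ 2 := by
    rw [Finset.mul_sum]
    refine Finset.sum_le_sum fun i _ => ?_
    have hq0 : 0 ≤ sqnorm (z i) := sqnorm_nonneg _
    have hq1 : sqnorm (z i) ≤ 1 + τ := by
      have := abs_le.1 (hdiag i); linarith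
    have hWi : W i ^ 2 = v i ^ 2 * Real.exp (-(2 * s * sqnorm (z i))) := by
      simp only [hW]
      rw [mul_pow, sq (Real.exp _), ← Real.exp_add]
      congr 2
      ring
    rw [hWi]
    have hexp : Real.exp (-6) ≤ Real.exp (-(2 * s * sqnorm (z i))) := by
      apply Real.exp_le_exp.2
      nlinarith
    nlinarith [sq_nonneg (v i), Real.exp_pos (-(2 * s * sqnorm (z i)))]
  have hWsq0 : 0 ≤ ∑ i, W i ^ 2 := Finset.sum_nonneg fun i _ => sq_nonneg _
  -- lower bound for Q_K
  have hQK : (1:ℝ)/2 * ∑ i, W i ^ 2 ≤ ∑ i, ∑ j, W i * W j * dotp (z i) (z j) ^ K := by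
    have hsplit : ∀ i : Fin n, (∑ j, W i * W j * dotp (z i) (z j) ^ K)
        = W i * W i * dotp (z i) (z i) ^ K
          + ∑ j ∈ Finset.univ.erase i, W i * W j * dotp (z i) (z j) ^ K := by
      intro i
      rw [← Finset.sum_erase_add Finset.univ _ (Finset.mem_univ i), add_comm]
    have hT1 : ∀ i : Fin n, (3:ℝ)/4 * W i ^ 2 ≤ W i * W i * dotp (z i) (z i) ^ K := by
      intro i
      have h1 : 1 - τ ≤ sqnorm (z i) := by
        have := abs_le.1 (hdiag i); linarith
      have h2 : (0:ℝ) ≤ 1 - τ := by linarith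
      have h3 : (1 - τ) ^ K ≤ dotp (z i) (z i) ^ K := pow_le_pow_left₀ h2 h1 K
      have h4 : 1 - (K:ℝ) * τ ≤ (1 - τ) ^ K := by
        have := one_add_mul_le_pow (show (-2:ℝ) ≤ -τ by linarith) K
        calc 1 - (K:ℝ) * τ = 1 + (K:ℝ) * (-τ) := by ring
          _ ≤ (1 + -τ) ^ K := this
          _ = (1 - τ) ^ K := by ring_nf
      have h5 : (3:ℝ)/4 ≤ dotp (z i) (z i) ^ K := by linarith
      nlinarith [sq_nonneg (W i)]
    have hT2 : ∀ i : Fin n, |∑ j ∈ Finset.univ.erase i, W i * W j * dotp (z i) (z j) ^ K|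
        ≤ ∑ j, |W i| * |W j| * τ ^ K := by
      intro i
      calc |∑ j ∈ Finset.univ.erase i, W i * W j * dotp (z i) (z j) ^ K|
          ≤ ∑ j ∈ Finset.univ.erase i, |W i * W j * dotp (z i) (z j) ^ K| :=
            Finset.abs_sum_le_sum_abs _ _
        _ ≤ ∑ j ∈ Finset.univ.erase i, |W i| * |W j| * τ ^ K := by
            refine Finset.sum_le_sum fun j hj => ?_
            rw [abs_mul, abs_mul]
            have hji : j ≠ i := Finset.ne_of_mem_erase hj
            have hoffij := hoff i j (Ne.symm hji)
            have habs : |dotp (z i) (z j) ^ K| ≤ τ ^ K := by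
              rw [abs_pow]
              exact pow_le_pow_left₀ (abs_nonneg _) hoffij K
            exact mul_le_mul_of_nonneg_left habs
              (mul_nonneg (abs_nonneg _) (abs_nonneg _))
        _ ≤ ∑ j, |W i| * |W j| * τ ^ K := by
            refine Finset.sum_le_sum_of_subset_of_nonneg (Finset.erase_subset _ _) ?_
            intro j _ _
            positivity
    have hCS : (∑ i, |W i|) ^ 2 ≤ (n:ℝ) * ∑ i, W i ^ 2 := by
      have := sq_sum_le_card_mul_sum_sq (s := (Finset.univ : Finset (Fin n)))
        (f := fun i => |W i|)
      simp only [Finset.card_univ, Fintype.card_fin, sq_abs] at this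
      exact_mod_cast this
    calc (1:ℝ)/2 * ∑ i, W i ^ 2
        = (3:ℝ)/4 * ∑ i, W i ^ 2 - 1/4 * ∑ i, W i ^ 2 := by ring
      _ ≤ (∑ i, W i * W i * dotp (z i) (z i) ^ K)
          + ∑ i, ∑ j ∈ Finset.univ.erase i, W i * W j * dotp (z i) (z j) ^ K := by
          have hA : (3:ℝ)/4 * ∑ i, W i ^ 2 ≤ ∑ i, W i * W i * dotp (z i) (z i) ^ K := by
            rw [Finset.mul_sum]
            exact Finset.sum_le_sum fun i _ => hT1 i
          have hB : -(1/4 * ∑ i, W i ^ 2)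
              ≤ ∑ i, ∑ j ∈ Finset.univ.erase i, W i * W j * dotp (z i) (z j) ^ K := by
            have h1 : |∑ i, ∑ j ∈ Finset.univ.erase i, W i * W j * dotp (z i) (z j) ^ K|
                ≤ ∑ i, ∑ j, |W i| * |W j| * τ ^ K := by
              calc |∑ i, ∑ j ∈ Finset.univ.erase i, W i * W j * dotp (z i) (z j) ^ K|
                  ≤ ∑ i, |∑ j ∈ Finset.univ.erase i, W i * W j * dotp (z i) (z j) ^ K| :=
                    Finset.abs_sum_le_sum_abs _ _
                _ ≤ ∑ i, ∑ j, |W i| * |W j| * τ ^ K := Finset.sum_le_sum fun i _ => hT2 i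
            have h2 : (∑ i, ∑ j, |W i| * |W j| * τ ^ K) ≤ 1/4 * ∑ i, W i ^ 2 := by
              have he : (∑ i, |W i|) ^ 2 * τ ^ K
                  = ∑ i, ∑ j, |W i| * |W j| * τ ^ K := by
                rw [pow_two, Finset.sum_mul_sum, Finset.sum_mul]
                exact Finset.sum_congr rfl fun i _ => by rw [Finset.sum_mul]
              rw [← he]
              have hτKnn : (0:ℝ) ≤ τ ^ K := pow_nonneg hτ0 K
              calc (∑ i, |W i|) ^ 2 * τ ^ K ≤ ((n:ℝ) * ∑ i, W i ^ 2) * τ ^ K :=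
                    mul_le_mul_of_nonneg_right hCS hτKnn
                _ = ((n:ℝ) * τ ^ K) * ∑ i, W i ^ 2 := by ring
                _ ≤ 4⁻¹ * ∑ i, W i ^ 2 := mul_le_mul_of_nonneg_right hnτ hWsq0
                _ = 1/4 * ∑ i, W i ^ 2 := by norm_num
            have h3 := (abs_le.1 (le_trans h1 h2)).1
            linarith
          linarith
      _ = ∑ i, ∑ j, W i * W j * dotp (z i) (z j) ^ K := by
          rw [← Finset.sum_add_distrib]
          exact Finset.sum_congr rfl fun i _ => (hsplit i).symm
  -- combine
  have hcoeff : (2:ℝ) ^ K / (K.factorial : ℝ) ≤ (2*s) ^ K / (K.factorial : ℝ) := by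
    have hfac : (0:ℝ) < (K.factorial : ℝ) := by exact_mod_cast K.factorial_pos
    have h2s : (2:ℝ) ^ K ≤ (2*s) ^ K := pow_le_pow_left₀ (by norm_num) (by linarith) K
    exact (div_le_div_iff_of_pos_right hfac).2 h2s
  have hQK0 : 0 ≤ ∑ i, ∑ j, W i * W j * dotp (z i) (z j) ^ K := gram_pow_nonneg z W K
  have hc1 : (0:ℝ) ≤ 2 ^ K / (K.factorial : ℝ) := by positivity
  calc (2:ℝ) ^ K / (K.factorial : ℝ) * Real.exp (-6) / 2 * ∑ i, v i ^ 2
      = (2 ^ K / (K.factorial : ℝ)) * (Real.exp (-6) / 2 * ∑ i, v i ^ 2) := by ring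
    _ ≤ (2 ^ K / (K.factorial : ℝ)) * ((1:ℝ)/2 * ∑ i, W i ^ 2) := by
        apply mul_le_mul_of_nonneg_left ?_ hc1
        nlinarith [hWsq]
    _ ≤ (2 ^ K / (K.factorial : ℝ)) * (∑ i, ∑ j, W i * W j * dotp (z i) (z j) ^ K) :=
        mul_le_mul_of_nonneg_left hQK hc1
    _ ≤ ((2*s) ^ K / (K.factorial : ℝ)) * (∑ i, ∑ j, W i * W j * dotp (z i) (z j) ^ K) :=
        mul_le_mul_of_nonneg_right hcoeff hQK0

lemma quadform_le {d n : ℕ} {γ τ : ℝ} (hγ0 : 0 < γ) (hγ1 : γ < 1) (K : ℕ)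
    (z : Fin n → Fin d → ℝ)
    (hτ0 : 0 ≤ τ) (hτ1 : τ ≤ 4⁻¹) (hτK : (K:ℝ) * τ ≤ 4⁻¹) (hnτ : (n:ℝ) * τ ^ K ≤ 4⁻¹)
    (hdiag : ∀ i, |sqnorm (z i) - 1| ≤ τ)
    (hoff : ∀ i j, i ≠ j → |dotp (z i) (z j)| ≤ τ)
    (v : Fin n → ℝ) (hv : ∑ i, v i = 0) :
    ∑ i, ∑ j, v i * v j * sqnorm (z i - z j) ^ γ
      ≤ -((2:ℝ) ^ K / (K.factorial : ℝ) * Real.exp (-6) / 2 / 4 / Jgam γ) * ∑ i, v i ^ 2 := by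
  have hJ : 0 < Jgam γ := Jgam_pos hγ0 hγ1
  have hfacpos : (0:ℝ) < (K.factorial : ℝ) := by exact_mod_cast K.factorial_pos
  set c0 : ℝ := (2:ℝ) ^ K / (K.factorial : ℝ) * Real.exp (-6) / 2 with hc0
  have hc0pos : 0 < c0 := by
    rw [hc0]; positivity
  set T : ℝ := ∑ i, ∑ j, v i * v j * sqnorm (z i - z j) ^ γ with hT
  set f : Fin n → Fin n → ℝ → ℝ := fun i j s =>
    v i * v j * ((1 - Real.exp (-(sqnorm (z i - z j) * s))) * s ^ (-1-γ)) with hf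
  have hint : ∀ i j : Fin n, IntegrableOn (f i j) (Set.Ioi 0) := fun i j =>
    (integrand_integrable hγ0 hγ1 (sqnorm_nonneg (z i - z j))).const_mul (v i * v j)
  have hJr : ∀ i j : Fin n, Jgam γ * sqnorm (z i - z j) ^ γ
      = ∫ s in Set.Ioi (0:ℝ), (1 - Real.exp (-(sqnorm (z i - z j) * s))) * s ^ (-1-γ) := by
    intro i j
    rcases eq_or_lt_of_le (sqnorm_nonneg (z i - z j)) with h0 | hpos
    · rw [← h0, Real.zero_rpow (ne_of_gt hγ0), mul_zero]
      symm
      simp [zero_mul, neg_zero, Real.exp_zero]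
    · rw [integral_scaled hγ0 hγ1 hpos, mul_comm]
      rfl
  set E : ℝ → ℝ := fun s => ∑ i, ∑ j, v i * v j * Real.exp (-(sqnorm (z i - z j) * s)) with hE
  have hpt : ∀ s : ℝ, (∑ i, ∑ j, f i j s) = -(E s * s ^ (-1-γ)) := by
    intro s
    have hzero : ((∑ i, v i) * (∑ j, v j)) * s ^ (-1-γ)
        = ∑ i, ∑ j, v i * v j * s ^ (-1-γ) := by
      rw [Finset.sum_mul_sum, Finset.sum_mul]
      refine Finset.sum_congr rfl fun i _ => ?_
      rw [Finset.sum_mul]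
    have hdistr : (∑ i, ∑ j, v i * v j * Real.exp (-(sqnorm (z i - z j) * s))) * s ^ (-1-γ)
        = ∑ i, ∑ j, v i * v j * Real.exp (-(sqnorm (z i - z j) * s)) * s ^ (-1-γ) := by
      rw [Finset.sum_mul]
      exact Finset.sum_congr rfl fun i _ => by rw [Finset.sum_mul]
    calc ∑ i, ∑ j, f i j s
        = ∑ i, ∑ j, (v i * v j * s ^ (-1-γ)
            - v i * v j * Real.exp (-(sqnorm (z i - z j) * s)) * s ^ (-1-γ)) :=
          Finset.sum_congr rfl fun i _ => Finset.sum_congr rfl fun j _ => by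
            simp only [hf]; ring
      _ = (∑ i, ∑ j, v i * v j * s ^ (-1-γ))
            - ∑ i, ∑ j, v i * v j * Real.exp (-(sqnorm (z i - z j) * s)) * s ^ (-1-γ) := by
          simp only [Finset.sum_sub_distrib]
      _ = -(E s * s ^ (-1-γ)) := by
          rw [← hzero, hv, zero_mul, zero_mul, ← hdistr, hE]
          ring
  have hintsum : IntegrableOn (fun s => ∑ i, ∑ j, f i j s) (Set.Ioi 0) :=
    integrable_finset_sum _ (fun i _ => integrable_finset_sum _ (fun j _ => hint i j))
  have hintE : IntegrableOn (fun s : ℝ => E s * s ^ (-1-γ)) (Set.Ioi 0) := by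
    have h := hintsum.neg
    refine h.congr ?_ -- ae eq
    refine Filter.EventuallyEq.of_eq (funext fun s => ?_)
    simp only [Pi.neg_apply]
    rw [hpt s, neg_neg]
  have hJT : Jgam γ * T = ∫ s in Set.Ioi (0:ℝ), ∑ i, ∑ j, f i j s := by
    have h1 : ∫ s in Set.Ioi (0:ℝ), ∑ i, ∑ j, f i j s
        = ∑ i, ∫ s in Set.Ioi (0:ℝ), ∑ j, f i j s :=
      integral_finset_sum _ (fun i _ => integrable_finset_sum _ (fun j _ => hint i j))
    have h2 : ∀ i : Fin n, ∫ s in Set.Ioi (0:ℝ), ∑ j, f i j s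
        = ∑ j, ∫ s in Set.Ioi (0:ℝ), f i j s :=
      fun i => integral_finset_sum _ (fun j _ => hint i j)
    have h3 : ∀ i j : Fin n, ∫ s in Set.Ioi (0:ℝ), f i j s
        = v i * v j * (Jgam γ * sqnorm (z i - z j) ^ γ) := by
      intro i j
      rw [hJr i j]
      simp only [hf]
      exact integral_const_mul _ _
    rw [h1]
    simp_rw [h2, h3]
    rw [hT, Finset.mul_sum]
    refine Finset.sum_congr rfl fun i _ => ?_
    rw [Finset.mul_sum]
    exact Finset.sum_congr rfl fun j _ => by ring
  have hJT2 : Jgam γ * T = - ∫ s in Set.Ioi (0:ℝ), E s * s ^ (-1-γ) := by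
    rw [hJT, show (fun s => ∑ i, ∑ j, f i j s) = fun s : ℝ => -(E s * s ^ (-1-γ)) from
      funext hpt]
    exact integral_neg _
  have hnnE : 0 ≤ᵐ[volume.restrict (Set.Ioi (0:ℝ))] fun s : ℝ => E s * s ^ (-1-γ) := by
    rw [Filter.EventuallyLE, ae_restrict_iff' measurableSet_Ioi]
    refine Filter.Eventually.of_forall fun s hs => ?_
    have h1 : (0:ℝ) < s := hs
    simpa using mul_nonneg (expF_nonneg z v h1) (Real.rpow_nonneg h1.le (-1-γ))
  have hmono : ∫ s in Set.Ioc (1:ℝ) 2, E s * s ^ (-1-γ)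
      ≤ ∫ s in Set.Ioi (0:ℝ), E s * s ^ (-1-γ) :=
    setIntegral_mono_set hintE hnnE
      (HasSubset.Subset.eventuallyLE (fun x hx => lt_trans one_pos hx.1))
  have hv2 : (0:ℝ) ≤ ∑ i, v i ^ 2 := Finset.sum_nonneg fun i _ => sq_nonneg _
  have hconst : ∫ _s in Set.Ioc (1:ℝ) 2, (c0 * 4⁻¹ * ∑ i, v i ^ 2) =
      c0 * 4⁻¹ * ∑ i, v i ^ 2 := by
    rw [setIntegral_const, Real.volume_real_Ioc]
    norm_num
  have hlow : c0 * 4⁻¹ * ∑ i, v i ^ 2 ≤ ∫ s in Set.Ioc (1:ℝ) 2, E s * s ^ (-1-γ) := by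
    rw [← hconst]
    apply setIntegral_mono_on
    · exact integrableOn_const (by rw [Real.volume_Ioc]; exact ENNReal.ofReal_ne_top)
    · exact hintE.mono_set (fun x hx => lt_trans one_pos hx.1)
    · exact measurableSet_Ioc
    · intro s hs
      have hs1 : (1:ℝ) ≤ s := hs.1.le
      have hs2 : s ≤ 2 := hs.2
      have hEs : c0 * ∑ i, v i ^ 2 ≤ E s := by
        rw [hc0, hE]
        exact expF_ge K z hτ0 hτ1 hτK hnτ hdiag hoff v hs1 hs2
      have hrp := inv4_le_rpow hγ0 hγ1 hs1 hs2
      have hE0 : 0 ≤ E s := expF_nonneg z v (lt_of_lt_of_le one_pos hs1)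
      calc c0 * 4⁻¹ * ∑ i, v i ^ 2 = (c0 * ∑ i, v i ^ 2) * 4⁻¹ := by ring
        _ ≤ E s * s ^ (-1-γ) := mul_le_mul hEs hrp (by norm_num) hE0
  have hkey : Jgam γ * T ≤ -(c0 * 4⁻¹ * ∑ i, v i ^ 2) := by
    rw [hJT2]
    have := le_trans hlow hmono
    linarith
  have hdiv : T ≤ (-(c0 * 4⁻¹ * ∑ i, v i ^ 2)) / Jgam γ := by
    rw [le_div_iff₀ hJ]
    linarith [hkey, mul_comm T (Jgam γ)]
  calc T ≤ (-(c0 * 4⁻¹ * ∑ i, v i ^ 2)) / Jgam γ := hdiv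
    _ = -(c0 / 4 / Jgam γ) * ∑ i, v i ^ 2 := by
        field_simp

lemma trace_eq_sum_eig {n : ℕ} {A : Matrix (Fin n) (Fin n) ℝ} (hA : A.IsHermitian) :
    A.trace = ∑ i, hA.eigenvalues i := by
  simpa using hA.trace_eq_sum_eigenvalues

lemma tendsto_log_rpow_div {a b : ℝ} (hb : 0 < b) :
    Tendsto (fun x : ℝ => Real.log x ^ a * x ^ (-b)) atTop (𝓝 0) := by
  have h := (isLittleO_log_rpow_rpow_atTop a hb).tendsto_div_nhds_zero
  refine Tendsto.congr' ?_ h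
  filter_upwards [eventually_gt_atTop (0:ℝ)] with x hx
  rw [Real.rpow_neg hx.le]
  exact div_eq_mul_inv _ _

lemma tendsto_tau {β ε : ℝ} (hβ : 0 < β) :
    Tendsto (fun n : ℕ => (n : ℝ) ^ (-(β/2)) * Real.log n ^ ((1+ε)/2)) atTop (𝓝 0) := by
  have h := (tendsto_log_rpow_div (a := (1+ε)/2) (half_pos hβ)).comp
    tendsto_natCast_atTop_atTop
  refine Tendsto.congr' ?_ h
  exact Filter.Eventually.of_forall fun n => by
    simp only [Function.comp_apply]
    ring

lemma tendsto_n_tauK {β ε : ℝ} (hβ : 0 < β) (K : ℕ) (hK : 2/β < (K:ℝ)) :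
    Tendsto (fun n : ℕ => (n:ℝ) * ((n : ℝ) ^ (-(β/2)) * Real.log n ^ ((1+ε)/2)) ^ K)
      atTop (𝓝 0) := by
  have hb : 0 < β/2*(K:ℝ) - 1 := by
    have h2 : 0 < β/2 := half_pos hβ
    have h3 := (div_lt_iff₀ hβ).1 hK
    nlinarith
  have h := (tendsto_log_rpow_div (a := (1+ε)/2*(K:ℝ)) hb).comp tendsto_natCast_atTop_atTop
  refine Tendsto.congr' ?_ h
  filter_upwards [eventually_ge_atTop 2] with n hn
  have hn1 : (1:ℝ) ≤ (n:ℝ) := by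
    have : (2:ℝ) ≤ (n:ℝ) := by exact_mod_cast hn
    linarith
  have hn0 : (0:ℝ) < n := lt_of_lt_of_le one_pos hn1
  have hlog : 0 ≤ Real.log n := Real.log_nonneg hn1
  simp only [Function.comp_apply]
  have e1 : ((n:ℝ) ^ (-(β/2))) ^ K = (n:ℝ) ^ (-(β/2)*(K:ℝ)) := by
    rw [← Real.rpow_natCast ((n:ℝ) ^ (-(β/2))) K, ← Real.rpow_mul hn0.le]
  have e2 : (Real.log n ^ ((1+ε)/2)) ^ K = Real.log n ^ ((1+ε)/2*(K:ℝ)) := by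
    rw [← Real.rpow_natCast (Real.log n ^ ((1+ε)/2)) K, ← Real.rpow_mul hlog]
  have e3 : (n:ℝ) * (n:ℝ) ^ (-(β/2)*(K:ℝ)) = (n:ℝ) ^ (-(β/2*(K:ℝ)-1)) := by
    nth_rewrite 1 [← Real.rpow_one (n:ℝ)]
    rw [← Real.rpow_add hn0]
    congr 1
    ring
  rw [mul_pow, e1, e2, ← mul_assoc, e3, mul_comm]

lemma quad_eig_general {n : ℕ} (D : Matrix (Fin n) (Fin n) ℝ)
    (w1 w2 : Fin n → ℝ) (l1 l2 : ℝ)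
    (h1 : ∀ s, (∑ t, D s t * w1 t) = l1 * w1 s)
    (h2 : ∀ s, (∑ t, D s t * w2 t) = l2 * w2 s)
    (h11 : ∑ s, w1 s * w1 s = 1) (h22 : ∑ s, w2 s * w2 s = 1)
    (h12 : ∑ s, w1 s * w2 s = 0) (h21 : ∑ s, w2 s * w1 s = 0)
    (a b : ℝ) :
    (∑ s, ∑ t, (a * w1 s + b * w2 s) * (a * w1 t + b * w2 t) * D s t)
      = a^2 * l1 + b^2 * l2 := by
  have hrow : ∀ s, (∑ t, (a * w1 t + b * w2 t) * D s t)
      = a * (l1 * w1 s) + b * (l2 * w2 s) := by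
    intro s
    rw [← h1 s, ← h2 s, Finset.mul_sum, Finset.mul_sum, ← Finset.sum_add_distrib]
    exact Finset.sum_congr rfl fun t _ => by ring
  calc ∑ s, ∑ t, (a * w1 s + b * w2 s) * (a * w1 t + b * w2 t) * D s t
      = ∑ s, (a * w1 s + b * w2 s) * ∑ t, (a * w1 t + b * w2 t) * D s t := by
        refine Finset.sum_congr rfl fun s _ => ?_
        rw [Finset.mul_sum]
        exact Finset.sum_congr rfl fun t _ => by ring
    _ = ∑ s, ((a*l1*a) * (w1 s * w1 s) + ((a*l1*b) * (w2 s * w1 s)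
          + ((b*l2*a) * (w1 s * w2 s) + (b*l2*b) * (w2 s * w2 s)))) := by
        refine Finset.sum_congr rfl fun s _ => ?_
        rw [hrow s]
        ring
    _ = (a*l1*a) * (∑ s, w1 s * w1 s) + ((a*l1*b) * (∑ s, w2 s * w1 s)
          + ((b*l2*a) * (∑ s, w1 s * w2 s) + (b*l2*b) * (∑ s, w2 s * w2 s))) := by
        rw [Finset.sum_add_distrib, Finset.sum_add_distrib, Finset.sum_add_distrib,
          ← Finset.mul_sum, ← Finset.mul_sum, ← Finset.mul_sum, ← Finset.mul_sum]
    _ = a^2 * l1 + b^2 * l2 := by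
        rw [h11, h22, h12, h21]
        ring

end LemC1

/-- The matrix of pairwise `α`-distances `‖z_i − z_j‖₂^α`. -/
def distMatrix {d n : ℕ} (α : ℝ) (zs : Fin n → Fin d → ℝ) : Matrix (Fin n) (Fin n) ℝ :=
  Matrix.of fun i j => (sqnorm (zs i - zs j)) ^ (α / 2)

set_option maxHeartbeats 1000000 in
open LemC1 in
theorem eigenvalues_of_alpha_distance_matrix
    -- exponent
    (α : ℝ) (hα : α ∈ Set.Ioo (0:ℝ) 2)
    -- high-dimensional regime
    (β c : ℝ) (hβ : 0 < β) (hc : 0 < c)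
    (d : ℕ → ℕ)
    (S : ∀ n, Matrix (Fin (d n)) (Fin (d n)) ℝ)
    (hS : ∀ n, (S n).PosSemidef) (hSnorm : ∀ n, OpNormOne (S n))
    (hreg : Tendsto (fun n => (S n).trace / (n : ℝ) ^ β) atTop (𝓝 c))
    -- fixed ε > 0
    (ε : ℝ) (hε : 0 < ε) :
    ∃ c' : ℝ, 0 < c' ∧ ∃ N : ℕ, ∀ n ≥ N,
      ∀ xs : Fin n → (Fin (d n) → ℝ),
        -- the concentration event E_X for the sample
        (∀ i j : Fin n,
          |dotp (xs i) (xs j) / (S n).trace - (if i = j then (1:ℝ) else 0)| ≤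
            (n : ℝ) ^ (-(β / 2)) * Real.log n ^ ((1 + ε) / 2)) →
        -- conclusions on the eigenvalues of D_α (with z_i = x_i/√(tr Σ))
        ∀ hH : (distMatrix α
            (fun i => (Real.sqrt (S n).trace)⁻¹ • xs i)).IsHermitian,
          (∀ i, c' ≤ |hH.eigenvalues i|) ∧
          (∃! i, 0 < hH.eigenvalues i) ∧
          (∀ i, 0 < hH.eigenvalues i → ((n : ℝ) - 1) * c' ≤ hH.eigenvalues i) ∧
          (∀ i, ¬ 0 < hH.eigenvalues i → hH.eigenvalues i ≤ -c') := by

  obtain ⟨hα0, hα2⟩ := hα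
  have hγ0 : 0 < α / 2 := by linarith
  have hγ1 : α / 2 < 1 := by linarith
  set K : ℕ := ⌊2/β⌋₊ + 1 with hK
  have hKβ : 2/β < (K:ℝ) := by
    have h := Nat.lt_floor_add_one (2/β)
    rw [hK]
    push_cast
    linarith
  have hJ := Jgam_pos hγ0 hγ1
  set c' : ℝ := (2:ℝ)^K / (K.factorial : ℝ) * Real.exp (-6) / 2 / 4 / Jgam (α/2) with hc'
  have hfacpos : (0:ℝ) < (K.factorial : ℝ) := by exact_mod_cast K.factorial_pos
  have hc'pos : 0 < c' := by
    rw [hc']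
    exact div_pos (by positivity) hJ
  refine ⟨c', hc'pos, ?_⟩
  have hev1 : ∀ᶠ n : ℕ in atTop, 0 < (S n).trace := by
    filter_upwards [hreg.eventually (eventually_gt_nhds (half_lt_self hc)), eventually_ge_atTop 1]
      with n h hn1
    have hcast : (1:ℝ) ≤ (n:ℝ) := by exact_mod_cast hn1
    have hn0 : (0:ℝ) < (n:ℝ) ^ β := Real.rpow_pos_of_pos (by linarith) β
    have hq : 0 < (S n).trace / (n:ℝ)^β := lt_trans (half_pos hc) h
    calc (0:ℝ) < ((S n).trace / (n:ℝ)^β) * (n:ℝ)^β := mul_pos hq hn0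
      _ = (S n).trace := div_mul_cancel₀ _ (ne_of_gt hn0)
  have hev3 : ∀ᶠ n : ℕ in atTop,
      (n : ℝ) ^ (-(β/2)) * Real.log n ^ ((1+ε)/2) ≤ 4⁻¹
      ∧ (K:ℝ) * ((n : ℝ) ^ (-(β/2)) * Real.log n ^ ((1+ε)/2)) ≤ 4⁻¹ := by
    have hpos : (0:ℝ) < 4⁻¹ / ((K:ℝ)+1) := by positivity
    filter_upwards [(tendsto_tau (ε := ε) hβ).eventually (eventually_le_nhds hpos)] with n hn
    have hKnn : (0:ℝ) ≤ (K:ℝ) := Nat.cast_nonneg K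
    have hK1 : (0:ℝ) < (K:ℝ) + 1 := by linarith
    have hfrac : (K:ℝ) / ((K:ℝ)+1) ≤ 1 := by
      rw [div_le_one hK1]
      linarith
    constructor
    · calc (n : ℝ) ^ (-(β/2)) * Real.log n ^ ((1+ε)/2) ≤ 4⁻¹/((K:ℝ)+1) := hn
        _ ≤ 4⁻¹ := by
          rw [div_le_iff₀ hK1]
          nlinarith
    · calc (K:ℝ) * ((n : ℝ) ^ (-(β/2)) * Real.log n ^ ((1+ε)/2))
          ≤ (K:ℝ) * (4⁻¹/((K:ℝ)+1)) := mul_le_mul_of_nonneg_left hn hKnn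
        _ = ((K:ℝ)/((K:ℝ)+1)) * 4⁻¹ := by ring
        _ ≤ 4⁻¹ := mul_le_of_le_one_left (by norm_num) hfrac
  have hev4 : ∀ᶠ n : ℕ in atTop,
      (n:ℝ) * ((n : ℝ) ^ (-(β/2)) * Real.log n ^ ((1+ε)/2)) ^ K ≤ 4⁻¹ :=
    (tendsto_n_tauK (ε := ε) hβ K hKβ).eventually (eventually_le_nhds (by norm_num))
  obtain ⟨N0, hN0⟩ := Filter.eventually_atTop.1 (hev1.and (hev3.and hev4))
  refine ⟨max N0 2, ?_⟩
  intro n hn xs hevent hH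
  have hn0 : n ≥ N0 := le_trans (le_max_left _ _) hn
  have hn2 : 2 ≤ n := le_trans (le_max_right _ _) hn
  obtain ⟨htr, ⟨hτ1, hτK⟩, hnτK⟩ := hN0 n hn0
  have hn2c : (2:ℝ) ≤ (n:ℝ) := by exact_mod_cast hn2
  have hτn0 : 0 ≤ (n : ℝ) ^ (-(β/2)) * Real.log n ^ ((1+ε)/2) :=
    mul_nonneg (Real.rpow_nonneg (Nat.cast_nonneg n) _)
      (Real.rpow_nonneg (Real.log_nonneg (by linarith)) _)
  set tr : ℝ := (S n).trace with htrdef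
  set z : Fin n → Fin (d n) → ℝ := fun i => (Real.sqrt tr)⁻¹ • xs i with hz
  have hdot : ∀ i j, dotp (z i) (z j) = dotp (xs i) (xs j) / tr := by
    intro i j
    have hsq : ((Real.sqrt tr)⁻¹) ^ 2 = tr⁻¹ := by
      rw [inv_pow, Real.sq_sqrt (le_of_lt htr)]
    calc dotp (z i) (z j) = ((Real.sqrt tr)⁻¹)^2 * dotp (xs i) (xs j) := dotp_smul _ _ _
      _ = dotp (xs i) (xs j) / tr := by rw [hsq]; ring
  have hdiag : ∀ i, |sqnorm (z i) - 1| ≤ (n : ℝ) ^ (-(β/2)) * Real.log n ^ ((1+ε)/2) := by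
    intro i
    have h := hevent i i
    rw [if_pos rfl] at h
    show |dotp (z i) (z i) - 1| ≤ _
    rw [hdot i i]
    exact h
  have hoff : ∀ i j, i ≠ j →
      |dotp (z i) (z j)| ≤ (n : ℝ) ^ (-(β/2)) * Real.log n ^ ((1+ε)/2) := by
    intro i j hij
    have h := hevent i j
    rw [if_neg hij, sub_zero] at h
    rw [hdot i j]
    exact h
  have hquad : ∀ v : Fin n → ℝ, (∑ i, v i = 0) →
      ∑ i, ∑ j, v i * v j * sqnorm (z i - z j) ^ (α/2) ≤ -c' * ∑ i, v i ^ 2 := by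
    intro v hv
    have h := quadform_le hγ0 hγ1 K z hτn0 hτ1 hτK hnτK hdiag hoff v hv
    rw [hc']
    exact h
  clear hc' hK
  clear_value c' K
  set Dm : Matrix (Fin n) (Fin n) ℝ := distMatrix α z with hDm
  have horth : ∀ p q : Fin n, (∑ t, hH.eigenvectorBasis p t * hH.eigenvectorBasis q t)
      = if p = q then (1:ℝ) else 0 := by
    intro p q
    have h := orthonormal_iff_ite.mp hH.eigenvectorBasis.orthonormal p q
    rw [← h]
    simp [PiLp.inner_apply, RCLike.inner_apply, conj_trivial]
    exact Finset.sum_congr rfl fun _ _ => mul_comm _ _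
  have heig : ∀ (p s : Fin n), (∑ t, Dm s t * hH.eigenvectorBasis p t)
      = hH.eigenvalues p * hH.eigenvectorBasis p s := by
    intro p s
    have h := congr_fun (hH.mulVec_eigenvectorBasis p) s
    simpa [Matrix.mulVec, dotProduct] using h
  have htrace0 : Dm.trace = 0 := by
    rw [Matrix.trace]
    refine Finset.sum_eq_zero fun i _ => ?_
    show sqnorm (z i - z i) ^ (α/2) = 0
    rw [sub_self]
    have h0 : sqnorm (0 : Fin (d n) → ℝ) = 0 := by simp [sqnorm, dotp]
    rw [h0, Real.zero_rpow (ne_of_gt hγ0)]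
  have hsum0 : ∑ i, hH.eigenvalues i = 0 := by
    rw [← trace_eq_sum_eig hH, htrace0]
  have key1 : ∀ i j : Fin n, i ≠ j → hH.eigenvalues i ≤ -c' ∨ hH.eigenvalues j ≤ -c' := by
    intro i j hij
    by_contra hcon
    push_neg at hcon
    obtain ⟨hi, hj⟩ := hcon
    obtain ⟨a, b, hab, habσ⟩ : ∃ a b : ℝ,
        0 < a^2 + b^2 ∧ a * (∑ t, hH.eigenvectorBasis i t)
          + b * (∑ t, hH.eigenvectorBasis j t) = 0 := by
      by_cases hσ : (∑ t, hH.eigenvectorBasis i t) = 0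
      · exact ⟨1, 0, by norm_num, by rw [hσ]; ring⟩
      · refine ⟨∑ t, hH.eigenvectorBasis j t, -(∑ t, hH.eigenvectorBasis i t), ?_, by ring⟩
        have h2 : 0 < (∑ t, hH.eigenvectorBasis i t)^2 := by positivity
        nlinarith [sq_nonneg (∑ t, hH.eigenvectorBasis j t)]
    set v : Fin n → ℝ :=
      fun t => a * hH.eigenvectorBasis i t + b * hH.eigenvectorBasis j t with hvdef
    have hvsum : ∑ t, v t = 0 := by
      simp only [hvdef]
      rw [Finset.sum_add_distrib, ← Finset.mul_sum, ← Finset.mul_sum]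
      exact habσ
    have hQ := hquad v hvsum
    have hval : ∑ s, ∑ t, v s * v t * Dm s t
        = a^2 * hH.eigenvalues i + b^2 * hH.eigenvalues j :=
      quad_eig_general Dm _ _ _ _ (heig i) (heig j)
        (by rw [horth i i, if_pos rfl]) (by rw [horth j j, if_pos rfl])
        (by rw [horth i j, if_neg hij]) (by rw [horth j i, if_neg (Ne.symm hij)])
        a b
    have hbridge : ∑ s, ∑ t, v s * v t * sqnorm (z s - z t) ^ (α/2)
        = ∑ s, ∑ t, v s * v t * Dm s t := rfl
    rw [hbridge, hval] at hQ
    have hvsq : ∑ t, v t ^ 2 = a^2 + b^2 := by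
      have hexp : ∀ t, v t ^ 2
          = a^2 * (hH.eigenvectorBasis i t * hH.eigenvectorBasis i t)
            + ((2*a*b) * (hH.eigenvectorBasis i t * hH.eigenvectorBasis j t)
            + b^2 * (hH.eigenvectorBasis j t * hH.eigenvectorBasis j t)) := by
        intro t
        simp only [hvdef]
        ring
      calc ∑ t, v t ^ 2
          = ∑ t, (a^2 * (hH.eigenvectorBasis i t * hH.eigenvectorBasis i t)
            + ((2*a*b) * (hH.eigenvectorBasis i t * hH.eigenvectorBasis j t)
            + b^2 * (hH.eigenvectorBasis j t * hH.eigenvectorBasis j t))) :=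
            Finset.sum_congr rfl fun t _ => hexp t
        _ = a^2 * (∑ t, hH.eigenvectorBasis i t * hH.eigenvectorBasis i t)
            + ((2*a*b) * (∑ t, hH.eigenvectorBasis i t * hH.eigenvectorBasis j t)
            + b^2 * (∑ t, hH.eigenvectorBasis j t * hH.eigenvectorBasis j t)) := by
            rw [Finset.sum_add_distrib, Finset.sum_add_distrib,
              ← Finset.mul_sum, ← Finset.mul_sum, ← Finset.mul_sum]
        _ = a^2 + b^2 := by
            rw [horth i i, horth i j, horth j j, if_pos rfl, if_pos rfl, if_neg hij]
            ring
    rw [hvsq] at hQ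
    have h1 : 0 ≤ (hH.eigenvalues i + c') * a^2 := mul_nonneg (by linarith) (sq_nonneg a)
    have h2 : 0 ≤ (hH.eigenvalues j + c') * b^2 := mul_nonneg (by linarith) (sq_nonneg b)
    have h3 : (hH.eigenvalues i + c') * a^2 + (hH.eigenvalues j + c') * b^2 ≤ 0 := by
      nlinarith [hQ]
    have ha2 : (hH.eigenvalues i + c') * a^2 = 0 := by linarith
    have hb2 : (hH.eigenvalues j + c') * b^2 = 0 := by linarith
    have ha0 : a^2 = 0 := by
      rcases mul_eq_zero.mp ha2 with h | h
      · exact absurd h (by linarith)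
      · exact h
    have hb0 : b^2 = 0 := by
      rcases mul_eq_zero.mp hb2 with h | h
      · exact absurd h (by linarith)
      · exact h
    linarith
  have hex : ∃ i0 : Fin n, -c' < hH.eigenvalues i0 := by
    by_contra h
    push_neg at h
    have hle : ∑ i, hH.eigenvalues i ≤ ∑ _i : Fin n, (-c') :=
      Finset.sum_le_sum fun i _ => h i
    rw [Finset.sum_const, Finset.card_univ, Fintype.card_fin, nsmul_eq_mul, hsum0] at hle
    nlinarith [hc'pos, hn2c]
  obtain ⟨i0, hi0⟩ := hex
  have hothers : ∀ j, j ≠ i0 → hH.eigenvalues j ≤ -c' := fun j hj =>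
    (key1 j i0 hj).resolve_right (not_le.2 hi0)
  have hbig : ((n:ℝ) - 1) * c' ≤ hH.eigenvalues i0 := by
    have hsplit := Finset.sum_erase_add Finset.univ hH.eigenvalues (Finset.mem_univ i0)
    have hsumerase : ∑ j ∈ Finset.univ.erase i0, hH.eigenvalues j ≤ ((n:ℝ) - 1) * (-c') := by
      calc ∑ j ∈ Finset.univ.erase i0, hH.eigenvalues j
          ≤ ∑ _j ∈ Finset.univ.erase i0, (-c') :=
            Finset.sum_le_sum fun j hj => hothers j (Finset.ne_of_mem_erase hj)
        _ = ((Finset.univ.erase i0).card : ℝ) * (-c') := by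
            rw [Finset.sum_const, nsmul_eq_mul]
        _ = ((n:ℝ) - 1) * (-c') := by
            rw [Finset.card_erase_of_mem (Finset.mem_univ i0), Finset.card_univ,
              Fintype.card_fin]
            have h1n : (1:ℕ) ≤ n := by omega
            have : ((n - 1 : ℕ) : ℝ) = (n:ℝ) - 1 := by
              push_cast [h1n]
              ring
            rw [this]
    have h0 : ∑ j ∈ Finset.univ.erase i0, hH.eigenvalues j + hH.eigenvalues i0 = 0 := by
      rw [hsplit]
      exact hsum0
    linarith
  have hi0pos : 0 < hH.eigenvalues i0 := by
    nlinarith [hbig, hc'pos, hn2c, mul_nonneg (by linarith : (0:ℝ) ≤ (n:ℝ) - 2) hc'pos.le]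
  refine ⟨?_, ⟨i0, hi0pos, ?_⟩, ?_, ?_⟩
  · intro i
    by_cases h : i = i0
    · subst h
      rw [abs_of_pos hi0pos]
      nlinarith [hbig, hc'pos, mul_nonneg (by linarith : (0:ℝ) ≤ (n:ℝ) - 2) hc'pos.le]
    · have hle := hothers i h
      rw [abs_of_neg (by linarith : hH.eigenvalues i < 0)]
      linarith
  · intro j hjpos
    by_contra hne
    have := hothers j hne
    linarith
  · intro i hipos
    have hii0 : i = i0 := by
      by_contra hne
      have := hothers i hne
      linarith
    rw [hii0]
    exact hbig
  · intro i hineg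
    have hne : i ≠ i0 := fun h => hineg (h ▸ hi0pos)
    exact hothers i hne
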